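/- arXiv:1101.4999 — 2 statements merged into one kernel-verified Lean document; each statement's English description precedes it below -/
import Mathlib

section
/- For a polynomial F over a field F and a point a ∈ F^m with mult(F, a) = r < ∞, and any k ∈ N_0^m, the multiplicity of the Hasse derivative F^{(k)} at a is at least r − (k_1 + ... + k_m). -/
/-- The `k`-th Hasse derivative of a multivariate polynomial `f`: the coefficient of
`T^k` in `f(X + T)`. -/
noncomputable def hasseDeriv {F : Type*} [CommRing F] {m : ℕ} (k : Fin m →₀ ℕ)
    (f : MvPolynomial (Fin m) F) : MvPolynomial (Fin m) F :=
  MvPolynomial.coeff k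
    (MvPolynomial.eval₂ (MvPolynomial.C.comp MvPolynomial.C)
      (fun j => MvPolynomial.X j + MvPolynomial.C (MvPolynomial.X j)) f)

/-- `f` has multiplicity at least `r` at the point `a`: all Hasse derivatives of total
order `< r` vanish at `a`. -/
def HasMultAtLeast {F : Type*} [CommRing F] {m : ℕ} (f : MvPolynomial (Fin m) F)
    (a : Fin m → F) (r : ℕ) : Prop :=
  ∀ k : Fin m →₀ ℕ, (∑ j, k j) < r → MvPolynomial.eval a (hasseDeriv k f) = 0

/-- The multiplicity of `f` at `a`: the largest `r` such that all Hasse derivatives of `f`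
of total order `< r` vanish at `a`. -/
noncomputable def multAt {F : Type*} [CommRing F] {m : ℕ} (f : MvPolynomial (Fin m) F)
    (a : Fin m → F) : ℕ :=
  sSup {r | HasMultAtLeast f a r}


open MvPolynomial Finset

lemma nat_key (a b c : ℕ) :
    (a + b).choose b * (a + (c + b)).choose c = (c + b).choose c * (a + (c + b)).choose (c + b) := by
  have h := Nat.choose_mul (n := a + (c + b)) (k := c + b) (s := c)
    (Nat.le_add_right _ _)
  have h1 : a + (c + b) - c = a + b := by omega
  have h2 : c + b - c = b := by omega
  rw [h1, h2] at h
  calc (a + b).choose b * (a + (c + b)).choose c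
      = (a + (c + b)).choose (c + b) * (c + b).choose c := by rw [h]; ring
    _ = _ := by ring

lemma pascal_aux (a b : ℕ) (hb : b ≠ 0) :
    (a + b - 1).choose (b - 1) + (a + b - 1).choose b = (a + b).choose b := by
  obtain ⟨c, rfl⟩ := Nat.exists_eq_succ_of_ne_zero hb
  simp only [Nat.add_succ, Nat.succ_sub_one]
  exact (Nat.choose_succ_succ _ _).symm

lemma coeff_hasseDeriv {F : Type*} [CommRing F] {m : ℕ} (f : MvPolynomial (Fin m) F) :
    ∀ k u : Fin m →₀ ℕ,
      MvPolynomial.coeff u (hasseDeriv k f)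
        = ((∏ j, ((u + k) j).choose (k j) : ℕ) : F) * MvPolynomial.coeff (u + k) f := by
  induction f using MvPolynomial.induction_on with
  | C a =>
    intro k u
    have hC : hasseDeriv k (C a : MvPolynomial (Fin m) F)
        = if (0 : Fin m →₀ ℕ) = k then C a else 0 := by
      unfold hasseDeriv; rw [eval₂_C, RingHom.comp_apply, coeff_C]
    rw [hC]
    rcases eq_or_ne k 0 with rfl | hk
    · simp
    · rw [if_neg (fun h => hk h.symm)]
      have h0 : MvPolynomial.coeff (u + k) (C a : MvPolynomial (Fin m) F) = 0 := by
        rw [coeff_C, if_neg]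
        intro h
        apply hk
        ext j
        have h' := DFunLike.congr_fun h.symm j
        simp only [Finsupp.add_apply, Finsupp.coe_zero, Pi.zero_apply] at h' ⊢
        omega
      simp [h0]
  | add p q hp hq =>
    intro k u
    have hadd : hasseDeriv k (p + q) = hasseDeriv k p + hasseDeriv k q := by
      unfold hasseDeriv; rw [eval₂_add, coeff_add]
    rw [hadd, coeff_add, hp, hq, coeff_add]
    ring
  | mul_X p j hp =>
    intro k u
    classical
    have hΦ : hasseDeriv k (p * X j)
        = (if j ∈ k.support then hasseDeriv (k - Finsupp.single j 1) p else 0)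
          + hasseDeriv k p * X j := by
      unfold hasseDeriv
      rw [eval₂_mul, eval₂_X, mul_add, coeff_add, coeff_mul_X']
      congr 1
      rw [mul_comm, coeff_C_mul, mul_comm]
    rw [hΦ, coeff_add, apply_ite (MvPolynomial.coeff u), coeff_zero, coeff_mul_X',
      coeff_mul_X' (u + k)]
    simp only [hp, Finsupp.mem_support_iff, ne_eq]
    by_cases hk : k j = 0 <;> by_cases hu : u j = 0
    · -- both zero
      rw [if_neg (not_not_intro hk), if_neg (not_not_intro hu),
        if_neg (not_not_intro (show (u + k) j = 0 by rw [Finsupp.add_apply, hk, hu]))]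
      simp
    · -- k j = 0, u j ≠ 0
      have heu : Finsupp.single j 1 ≤ u :=
        Finsupp.single_le_iff.mpr (Nat.one_le_iff_ne_zero.mpr hu)
      have h1 : u - Finsupp.single j 1 + k = u + k - Finsupp.single j 1 :=
        tsub_add_eq_add_tsub heu
      have hprod : (∏ j', (((u + k - Finsupp.single j 1 : Fin m →₀ ℕ)) j').choose (k j'))
          = ∏ j', ((u + k) j').choose (k j') := by
        refine Finset.prod_congr rfl fun i _ => ?_
        rcases eq_or_ne i j with rfl | hij
        · simp [Finsupp.tsub_apply, Finsupp.add_apply, hk]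
        · simp [Finsupp.tsub_apply, Finsupp.add_apply, Finsupp.single_eq_of_ne hij]
      rw [if_neg (not_not_intro hk), if_pos hu,
        if_pos (show ¬ (u + k) j = 0 by rw [Finsupp.add_apply]; omega), zero_add, h1, hprod]
    · -- k j ≠ 0, u j = 0
      have hek : Finsupp.single j 1 ≤ k :=
        Finsupp.single_le_iff.mpr (Nat.one_le_iff_ne_zero.mpr hk)
      have h1 : u + (k - Finsupp.single j 1) = u + k - Finsupp.single j 1 :=
        (add_tsub_assoc_of_le hek u).symm
      have hprod : (∏ j', (((u + k - Finsupp.single j 1 : Fin m →₀ ℕ)) j').choose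
            (((k - Finsupp.single j 1 : Fin m →₀ ℕ)) j'))
          = ∏ j', ((u + k) j').choose (k j') := by
        refine Finset.prod_congr rfl fun i _ => ?_
        rcases eq_or_ne i j with rfl | hij
        · simp [Finsupp.tsub_apply, Finsupp.add_apply, hu, Nat.choose_self]
        · simp [Finsupp.tsub_apply, Finsupp.add_apply, Finsupp.single_eq_of_ne hij]
      rw [if_pos hk, if_neg (not_not_intro hu), add_zero,
        if_pos (show ¬ (u + k) j = 0 by rw [Finsupp.add_apply]; omega), h1, hprod]
    · -- both nonzero
      have hek : Finsupp.single j 1 ≤ k :=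
        Finsupp.single_le_iff.mpr (Nat.one_le_iff_ne_zero.mpr hk)
      have heu : Finsupp.single j 1 ≤ u :=
        Finsupp.single_le_iff.mpr (Nat.one_le_iff_ne_zero.mpr hu)
      have h1 : u + (k - Finsupp.single j 1) = u + k - Finsupp.single j 1 :=
        (add_tsub_assoc_of_le hek u).symm
      have h2 : u - Finsupp.single j 1 + k = u + k - Finsupp.single j 1 :=
        tsub_add_eq_add_tsub heu
      rw [if_pos hk, if_pos hu,
        if_pos (show ¬ (u + k) j = 0 by rw [Finsupp.add_apply]; omega), h1, h2, ← add_mul,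
        ← Nat.cast_add]
      have hkey : (∏ j', (((u + k - Finsupp.single j 1 : Fin m →₀ ℕ)) j').choose
            (((k - Finsupp.single j 1 : Fin m →₀ ℕ)) j'))
          + (∏ j', (((u + k - Finsupp.single j 1 : Fin m →₀ ℕ)) j').choose (k j'))
          = ∏ j', ((u + k) j').choose (k j') := by
        have hj1 : ((u + k - Finsupp.single j 1 : Fin m →₀ ℕ)) j = u j + k j - 1 := by
          simp [Finsupp.tsub_apply, Finsupp.add_apply]
        have hj2 : ((k - Finsupp.single j 1 : Fin m →₀ ℕ)) j = k j - 1 := by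
          simp [Finsupp.tsub_apply]
        have hj3 : (u + k) j = u j + k j := Finsupp.add_apply u k j
        have t1 : ∏ j' ∈ Finset.univ.erase j,
              (((u + k - Finsupp.single j 1 : Fin m →₀ ℕ)) j').choose (((k - Finsupp.single j 1 : Fin m →₀ ℕ)) j')
            = ∏ j' ∈ Finset.univ.erase j, ((u + k) j').choose (k j') := by
          refine Finset.prod_congr rfl fun i hi => ?_
          have hij : i ≠ j := Finset.ne_of_mem_erase hi
          simp [Finsupp.tsub_apply, Finsupp.single_eq_of_ne hij]
        have t2 : ∏ j' ∈ Finset.univ.erase j,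
              (((u + k - Finsupp.single j 1 : Fin m →₀ ℕ)) j').choose (k j')
            = ∏ j' ∈ Finset.univ.erase j, ((u + k) j').choose (k j') := by
          refine Finset.prod_congr rfl fun i hi => ?_
          have hij : i ≠ j := Finset.ne_of_mem_erase hi
          simp [Finsupp.tsub_apply, Finsupp.single_eq_of_ne hij]
        rw [← Finset.mul_prod_erase _
            (fun j' => (((u + k - Finsupp.single j 1 : Fin m →₀ ℕ)) j').choose (((k - Finsupp.single j 1 : Fin m →₀ ℕ)) j'))
            (Finset.mem_univ j),
          ← Finset.mul_prod_erase _
            (fun j' => (((u + k - Finsupp.single j 1 : Fin m →₀ ℕ)) j').choose (k j'))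
            (Finset.mem_univ j),
          ← Finset.mul_prod_erase _ (fun j' => ((u + k) j').choose (k j'))
            (Finset.mem_univ j)]
        simp only [t1, t2, hj1, hj2, hj3]
        rw [← add_mul, pascal_aux _ _ hk]
      rw [hkey]

lemma hasseDeriv_comp {F : Type*} [CommRing F] {m : ℕ} (f : MvPolynomial (Fin m) F)
    (k l : Fin m →₀ ℕ) :
    hasseDeriv l (hasseDeriv k f)
      = MvPolynomial.C ((∏ j, ((k + l) j).choose (k j) : ℕ) : F) * hasseDeriv (k + l) f := by
  ext u
  rw [MvPolynomial.coeff_C_mul, coeff_hasseDeriv, coeff_hasseDeriv, coeff_hasseDeriv]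
  have hadd : (u + l) + k = u + (k + l) := by
    rw [add_assoc, add_comm l k]
  rw [hadd, ← mul_assoc, ← mul_assoc, ← Nat.cast_mul, ← Nat.cast_mul]
  congr 2
  rw [← Finset.prod_mul_distrib, ← Finset.prod_mul_distrib]
  refine Finset.prod_congr rfl fun i _ => ?_
  simp only [Finsupp.add_apply]
  exact nat_key (u i) (l i) (k i)

/-- If `f` is nonzero with multiplicity exactly `r` at `a`, then for any
multi-index `k`, the Hasse derivative `f^{(k)}` has multiplicity at least
`r − (k_1 + ⋯ + k_m)` at `a`. -/
theorem hasseDeriv_multAt_ge {F : Type*} [Field F] {m : ℕ}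
    (f : MvPolynomial (Fin m) F) (hf : f ≠ 0) (a : Fin m → F) (r : ℕ)
    (hmult : multAt f a = r) (k : Fin m →₀ ℕ) :
    HasMultAtLeast (hasseDeriv k f) a (r - ∑ j, k j) := by
  intro l hl
  have hr1 : 1 ≤ r := by omega
  have hfr : HasMultAtLeast f a r := by
    by_cases hb : BddAbove {s | HasMultAtLeast f a s}
    · have h0 : (0 : ℕ) ∈ {s | HasMultAtLeast f a s} := fun w hw => absurd hw (Nat.not_lt_zero _)
      have hm := Nat.sSup_mem ⟨0, h0⟩ hb
      rwa [show sSup {s | HasMultAtLeast f a s} = r from hmult] at hm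
    · exfalso
      have h0 : multAt f a = 0 := by
        unfold multAt
        rw [csSup_of_not_bddAbove hb, csSup_empty]
        rfl
      omega
  rw [hasseDeriv_comp, map_mul, MvPolynomial.eval_C]
  have hsum : (∑ j, (k + l) j) = (∑ j, k j) + ∑ j, l j := by
    simp [Finsupp.add_apply, Finset.sum_add_distrib]
  rw [hfr (k + l) (by rw [hsum]; omega), mul_zero]
end

section
/- For nonzero polynomials F, G ∈ F[X_1,...,X_m] and a point a ∈ F^m, mult(F·G, a) = mult(F, a) + mult(G, a). -/
namespace MultAtAux

open MvPolynomial

variable {F : Type*} [Field F] {m : ℕ}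

/-- The substitution `X ↦ X + a`, as a ring homomorphism. -/
noncomputable def shiftHom (a : Fin m → F) :
    MvPolynomial (Fin m) F →+* MvPolynomial (Fin m) F :=
  MvPolynomial.eval₂Hom MvPolynomial.C (fun j => MvPolynomial.X j + MvPolynomial.C (a j))

lemma shiftHom_comp (a : Fin m → F) :
    (shiftHom (-a)).comp (shiftHom a) = RingHom.id _ := by
  apply MvPolynomial.ringHom_ext
  · intro r; simp [shiftHom]
  · intro j; simp [shiftHom]

lemma shiftHom_ne_zero (a : Fin m → F) {f : MvPolynomial (Fin m) F} (hf : f ≠ 0) :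
    shiftHom a f ≠ 0 := by
  intro h
  apply hf
  have h2 := RingHom.congr_fun (shiftHom_comp a) f
  rw [RingHom.comp_apply, h, map_zero] at h2
  exact h2.symm

lemma eval_hasseDeriv (a : Fin m → F) (f : MvPolynomial (Fin m) F) (k : Fin m →₀ ℕ) :
    MvPolynomial.eval a (hasseDeriv k f) = MvPolynomial.coeff k (shiftHom a f) := by
  unfold hasseDeriv
  rw [← MvPolynomial.coeff_map]
  congr 1
  have h : (MvPolynomial.map (MvPolynomial.eval a)).comp
      (MvPolynomial.eval₂Hom (MvPolynomial.C.comp MvPolynomial.C)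
        (fun j => MvPolynomial.X j + MvPolynomial.C (MvPolynomial.X j)))
      = shiftHom a := by
    apply MvPolynomial.ringHom_ext
    · intro r; simp [shiftHom]
    · intro j; simp [shiftHom]
  have := RingHom.congr_fun h f
  rw [RingHom.comp_apply] at this
  simpa [shiftHom] using this

/-- The order of vanishing of `p` at the origin: the least degree of a nonzero
homogeneous component. -/
noncomputable def ord (p : MvPolynomial (Fin m) F) : ℕ :=
  sInf {n | MvPolynomial.homogeneousComponent n p ≠ 0}

lemma ord_set_nonempty {p : MvPolynomial (Fin m) F} (hp : p ≠ 0) :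
    {n | MvPolynomial.homogeneousComponent n p ≠ 0}.Nonempty := by
  by_contra h
  rw [Set.not_nonempty_iff_eq_empty, Set.eq_empty_iff_forall_notMem] at h
  apply hp
  rw [← MvPolynomial.sum_homogeneousComponent (φ := p)]
  refine Finset.sum_eq_zero fun i _ => ?_
  have := h i
  simpa using this

lemma homogeneousComponent_ord_ne_zero {p : MvPolynomial (Fin m) F} (hp : p ≠ 0) :
    MvPolynomial.homogeneousComponent (ord p) p ≠ 0 :=
  Nat.sInf_mem (ord_set_nonempty hp)

lemma homogeneousComponent_eq_zero_of_lt {p : MvPolynomial (Fin m) F} {n : ℕ}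
    (hn : n < ord p) : MvPolynomial.homogeneousComponent n p = 0 := by
  have := Nat.notMem_of_lt_sInf hn
  simpa using this

lemma coeff_eq_zero_of_degree_lt {p : MvPolynomial (Fin m) F} {d : Fin m →₀ ℕ}
    (hd : d.degree < ord p) : MvPolynomial.coeff d p = 0 := by
  have h0 := homogeneousComponent_eq_zero_of_lt hd
  have h1 := MvPolynomial.coeff_homogeneousComponent (σ := Fin m) (R := F)
    (n := d.degree) (φ := p) d
  rw [h0, if_pos rfl] at h1
  simpa using h1.symm

lemma coeff_mul_eq (p q : MvPolynomial (Fin m) F) (c d : ℕ)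
    (hp : ∀ u : Fin m →₀ ℕ, u.degree < c → MvPolynomial.coeff u p = 0)
    (hq : ∀ u : Fin m →₀ ℕ, u.degree < d → MvPolynomial.coeff u q = 0)
    (e : Fin m →₀ ℕ) (he : e.degree ≤ c + d) :
    MvPolynomial.coeff e (p * q) =
      MvPolynomial.coeff e
        (MvPolynomial.homogeneousComponent c p * MvPolynomial.homogeneousComponent d q) := by
  rw [MvPolynomial.coeff_mul, MvPolynomial.coeff_mul]
  refine Finset.sum_congr rfl fun uv huv => ?_
  rw [Finset.HasAntidiagonal.mem_antidiagonal] at huv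
  rw [MvPolynomial.coeff_homogeneousComponent, MvPolynomial.coeff_homogeneousComponent]
  have hdeg : uv.1.degree + uv.2.degree = e.degree := by
    rw [← huv]
    simp [Finsupp.degree_eq_weight_one, map_add]
  by_cases h1 : uv.1.degree = c
  · by_cases h2 : uv.2.degree = d
    · rw [if_pos h1, if_pos h2]
    · have h2' : uv.2.degree < d := by omega
      rw [if_neg h2, hq _ h2', mul_zero, mul_zero]
  · by_cases h1' : uv.1.degree < c
    · rw [if_neg h1, hp _ h1', zero_mul, zero_mul]
    · have h2' : uv.2.degree < d := by omega
      rw [if_neg h1, hq _ h2', mul_zero, zero_mul]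

lemma homComp_mul_lt (p q : MvPolynomial (Fin m) F) (c d : ℕ)
    (hp : ∀ u : Fin m →₀ ℕ, u.degree < c → MvPolynomial.coeff u p = 0)
    (hq : ∀ u : Fin m →₀ ℕ, u.degree < d → MvPolynomial.coeff u q = 0)
    {n : ℕ} (hn : n < c + d) : MvPolynomial.homogeneousComponent n (p * q) = 0 := by
  apply MvPolynomial.ext
  intro e
  rw [MvPolynomial.coeff_homogeneousComponent, MvPolynomial.coeff_zero]
  split_ifs with h
  · rw [coeff_mul_eq p q c d hp hq e (by omega)]
    exact ((MvPolynomial.homogeneousComponent_isHomogeneous c p).mul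
      (MvPolynomial.homogeneousComponent_isHomogeneous d q)).coeff_eq_zero (by omega)
  · rfl

lemma homComp_mul_eq (p q : MvPolynomial (Fin m) F) (c d : ℕ)
    (hp : ∀ u : Fin m →₀ ℕ, u.degree < c → MvPolynomial.coeff u p = 0)
    (hq : ∀ u : Fin m →₀ ℕ, u.degree < d → MvPolynomial.coeff u q = 0) :
    MvPolynomial.homogeneousComponent (c + d) (p * q) =
      MvPolynomial.homogeneousComponent c p * MvPolynomial.homogeneousComponent d q := by
  apply MvPolynomial.ext
  intro e
  rw [MvPolynomial.coeff_homogeneousComponent]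
  split_ifs with h
  · exact coeff_mul_eq p q c d hp hq e h.le
  · exact (((MvPolynomial.homogeneousComponent_isHomogeneous c p).mul
      (MvPolynomial.homogeneousComponent_isHomogeneous d q)).coeff_eq_zero h).symm

lemma ord_mul {p q : MvPolynomial (Fin m) F} (hp : p ≠ 0) (hq : q ≠ 0) :
    ord (p * q) = ord p + ord q := by
  have hpc : ∀ u : Fin m →₀ ℕ, u.degree < ord p → MvPolynomial.coeff u p = 0 :=
    fun u hu => coeff_eq_zero_of_degree_lt hu
  have hqc : ∀ u : Fin m →₀ ℕ, u.degree < ord q → MvPolynomial.coeff u q = 0 :=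
    fun u hu => coeff_eq_zero_of_degree_lt hu
  have hmem : MvPolynomial.homogeneousComponent (ord p + ord q) (p * q) ≠ 0 := by
    rw [homComp_mul_eq p q (ord p) (ord q) hpc hqc]
    exact mul_ne_zero (homogeneousComponent_ord_ne_zero hp)
      (homogeneousComponent_ord_ne_zero hq)
  refine le_antisymm (Nat.sInf_le hmem) ?_
  by_contra h
  push_neg at h
  have := Nat.sInf_mem (Set.nonempty_of_mem (s := {n | MvPolynomial.homogeneousComponent n (p * q) ≠ 0}) hmem)
  exact this (homComp_mul_lt p q (ord p) (ord q) hpc hqc h)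

lemma sum_eq_degree (k : Fin m →₀ ℕ) : (∑ j, k j) = k.degree := by
  rw [Finsupp.degree]
  exact (Finset.sum_subset (Finset.subset_univ _)
    (fun x _ hx => Finsupp.notMem_support_iff.mp hx)).symm

lemma hasMultAtLeast_iff_le {f : MvPolynomial (Fin m) F} (hf : f ≠ 0) (a : Fin m → F)
    (r : ℕ) : HasMultAtLeast f a r ↔ r ≤ ord (shiftHom a f) := by
  constructor
  · intro h
    by_contra hlt
    push_neg at hlt
    have hmem := homogeneousComponent_ord_ne_zero (shiftHom_ne_zero a hf)
    apply hmem
    apply MvPolynomial.ext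
    intro e
    rw [MvPolynomial.coeff_homogeneousComponent, MvPolynomial.coeff_zero]
    split_ifs with he
    · rw [← eval_hasseDeriv]
      exact h e (by rw [sum_eq_degree, he]; omega)
    · rfl
  · intro h k hk
    rw [eval_hasseDeriv]
    apply coeff_eq_zero_of_degree_lt
    rw [← sum_eq_degree]
    omega

lemma multAt_eq_ord {f : MvPolynomial (Fin m) F} (hf : f ≠ 0) (a : Fin m → F) :
    multAt f a = ord (shiftHom a f) := by
  unfold multAt
  have : {r | HasMultAtLeast f a r} = Set.Iic (ord (shiftHom a f)) :=
    Set.ext fun r => hasMultAtLeast_iff_le hf a r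
  rw [this, csSup_Iic]

end MultAtAux

/-- Multiplicities are additive under multiplication: for nonzero
polynomials `f, g` over a field and any point `a`,
`mult(f·g, a) = mult(f, a) + mult(g, a)`. -/
theorem multAt_mul {F : Type*} [Field F] {m : ℕ}
    (f g : MvPolynomial (Fin m) F) (hf : f ≠ 0) (hg : g ≠ 0) (a : Fin m → F) :
    multAt (f * g) a = multAt f a + multAt g a := by
  rw [MultAtAux.multAt_eq_ord (mul_ne_zero hf hg) a, MultAtAux.multAt_eq_ord hf a,
    MultAtAux.multAt_eq_ord hg a, map_mul]
  exact MultAtAux.ord_mul (MultAtAux.shiftHom_ne_zero a hf) (MultAtAux.shiftHom_ne_zero a hg)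
end
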